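/- arXiv:2010.05955 — 3 statements merged into one kernel-verified Lean document; each statement's English description precedes it below -/
import Mathlib

section
/- For every s ∈ ℂ with Re s > 1/2 and every M ∈ ℕ, there exists a function g_{M+1} holomorphic on the half-plane {Re s > -M/2} such that ∑_{j=0}^∞ ((j+X)(j+1+X))^{-s} = ∑_{m=0}^{M} binom(-s, m) ζ(2s+m, X) + g_{M+1}(s), where X = x₀⁻¹ with x₀ ∈ (0,1), ζ(·,·) is the Hurwitz zeta function, and moreover for every γ > 0 one has g_{M+1}(s) = O(|s|^{M+1}) as |s| → ∞ in {Re s ≥ -M/2 + γ}. -/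
open Complex Finset

/-- The generalized binomial coefficient `binom(z, m) = z(z-1)⋯(z-m+1)/m!`. -/
noncomputable def genBinom (z : ℂ) (m : ℕ) : ℂ :=
  (∏ i ∈ Finset.range m, (z - i)) / (m.factorial : ℂ)

/-- The Hurwitz zeta function `ζ(s,q) = ∑_{j≥0} (j+q)^{-s}` (as a series; for
`Re s > 1` this agrees with the meromorphic continuation). -/
noncomputable def hurwitzSeries (s q : ℂ) : ℂ := ∑' j : ℕ, ((j : ℂ) + q) ^ (-s)

/-- Taylor remainder of the binomial series. -/
noncomputable def remP (s : ℂ) (M : ℕ) (u : ℝ) : ℂ :=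
  ((1 + u : ℝ) : ℂ) ^ (-s) - ∑ m ∈ Finset.range M, genBinom (-s) m * ((u ^ m : ℝ) : ℂ)

lemma genBinom_zero (z : ℂ) : genBinom z 0 = 1 := by
  simp [genBinom]

lemma genBinom_succ (z : ℂ) (m : ℕ) :
    ((m : ℂ) + 1) * genBinom z (m + 1) = z * genBinom (z - 1) m := by
  have hm : ((m.factorial : ℂ)) ≠ 0 := Nat.cast_ne_zero.mpr (Nat.factorial_ne_zero m)
  have hm1 : ((m : ℂ) + 1) ≠ 0 := Nat.cast_add_one_ne_zero m
  have hprod : ∏ i ∈ Finset.range (m + 1), (z - i) =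
      z * ∏ i ∈ Finset.range m, (z - 1 - i) := by
    rw [Finset.prod_range_succ']
    simp only [Nat.cast_zero, sub_zero, Nat.cast_add, Nat.cast_one]
    rw [mul_comm]
    congr 1
    refine Finset.prod_congr rfl fun i _ => by ring
  rw [genBinom, genBinom, hprod, Nat.factorial_succ]
  push_cast
  field_simp

lemma remP_hasDerivAt (s : ℂ) (M : ℕ) {t : ℝ} (ht : 0 < 1 + t) :
    HasDerivAt (fun u : ℝ => remP s (M + 1) u) (-s * remP (s + 1) M t) t := by
  have hE : HasDerivAt (fun z : ℂ => (1 + z) ^ (-s))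
      (-s * (1 + (t : ℂ)) ^ (-s - 1) * 1) (t : ℂ) := by
    have hin : HasDerivAt (fun z : ℂ => 1 + z) 1 (t : ℂ) := by
      simpa using (hasDerivAt_id (t : ℂ)).const_add 1
    refine hin.cpow_const ?_
    show (1 + (t : ℂ)) ∈ slitPlane
    rw [show (1 + (t : ℂ)) = ((1 + t : ℝ) : ℂ) by push_cast; ring]
    exact ofReal_mem_slitPlane.2 ht
  have h1 : HasDerivAt (fun u : ℝ => ((1 + u : ℝ) : ℂ) ^ (-s))
      (-s * ((1 + t : ℝ) : ℂ) ^ (-s - 1) * 1) t := by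
    simpa only [Complex.ofReal_add, Complex.ofReal_one] using hE.comp_ofReal
  have h2 : HasDerivAt (fun u : ℝ =>
      ∑ m ∈ Finset.range (M + 1), genBinom (-s) m * ((u ^ m : ℝ) : ℂ))
      (∑ m ∈ Finset.range (M + 1), genBinom (-s) m * (((m : ℝ) * t ^ (m - 1) : ℝ) : ℂ)) t := by
    refine HasDerivAt.fun_sum fun m _ => ?_
    exact ((hasDerivAt_pow m t).ofReal_comp).const_mul _
  have key : -s * ((1 + t : ℝ) : ℂ) ^ (-s - 1) * 1 -
      ∑ m ∈ Finset.range (M + 1), genBinom (-s) m * (((m : ℝ) * t ^ (m - 1) : ℝ) : ℂ)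
      = -s * remP (s + 1) M t := by
    rw [remP, Finset.sum_range_succ']
    have hsum : ∀ m ∈ Finset.range M,
        genBinom (-s) (m + 1) * ((((m + 1 : ℕ) : ℝ) * t ^ ((m + 1) - 1) : ℝ) : ℂ)
        = -s * (genBinom (-(s + 1)) m * ((t ^ m : ℝ) : ℂ)) := by
      intro m _
      have h := genBinom_succ (-s) m
      rw [show (-s - 1 : ℂ) = -(s + 1) by ring] at h
      push_cast
      calc genBinom (-s) (m + 1) * (((m : ℂ) + 1) * (t : ℂ) ^ m)
          = (((m : ℂ) + 1) * genBinom (-s) (m + 1)) * (t : ℂ) ^ m := by ring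
        _ = (-s * genBinom (-(s + 1)) m) * (t : ℂ) ^ m := by rw [h]
        _ = -s * (genBinom (-(s + 1)) m * (t : ℂ) ^ m) := by ring
    rw [Finset.sum_congr rfl hsum]
    simp only [genBinom_zero, Nat.cast_zero, zero_mul, Complex.ofReal_zero, mul_zero,
      add_zero, mul_one, one_mul]
    rw [mul_sub, Finset.mul_sum, show (-s - 1 : ℂ) = -(s + 1) by ring]
  rw [← key]
  exact h1.sub h2

lemma remP_zero_eval (s : ℂ) (M : ℕ) : remP s (M + 1) 0 = 0 := by
  rw [remP, Finset.sum_range_succ']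
  simp [genBinom_zero, zero_pow]

lemma remP_continuousOn (s : ℂ) (M : ℕ) :
    ContinuousOn (fun u : ℝ => remP s M u) {t : ℝ | 0 < 1 + t} := by
  refine ContinuousOn.sub ?_ (Continuous.continuousOn ?_)
  · intro t ht
    refine ContinuousAt.continuousWithinAt ?_
    have hcast : ContinuousAt (fun u : ℝ => ((1 + u : ℝ) : ℂ)) t :=
      (Complex.continuous_ofReal.comp (continuous_const.add continuous_id)).continuousAt
    exact hcast.cpow continuousAt_const (Or.inl (by simpa using ht))
  · exact continuous_finset_sum _ fun m _ =>
      continuous_const.mul (Complex.continuous_ofReal.comp (continuous_pow m))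

lemma remP_bound (M : ℕ) : ∀ (s : ℂ) (u : ℝ), 0 ≤ u → -(M : ℝ) ≤ s.re →
    ‖remP s M u‖ ≤ (∏ i ∈ Finset.range M, ‖s + i‖) * u ^ M / M.factorial := by
  induction M with
  | zero =>
    intro s u hu hs
    simp only [Nat.cast_zero, neg_zero] at hs
    simp only [remP, Finset.range_zero, Finset.sum_empty, sub_zero, Finset.prod_empty,
      pow_zero, Nat.factorial_zero, Nat.cast_one, one_mul, mul_one, div_one]
    rw [Complex.norm_cpow_eq_rpow_re_of_pos (by linarith)]
    exact Real.rpow_le_one_of_one_le_of_nonpos (by linarith) (by simpa using hs)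
  | succ M ih =>
    intro s u hu hs
    have hs' : -(M : ℝ) ≤ (s + 1).re := by
      simp only [Complex.add_re, Complex.one_re]
      push_cast at hs ⊢
      linarith
    have hderiv : ∀ t ∈ Set.uIcc (0 : ℝ) u,
        HasDerivAt (fun v => remP s (M + 1) v) (-s * remP (s + 1) M t) t := by
      intro t htu
      rw [Set.uIcc_of_le hu] at htu
      exact remP_hasDerivAt s M (by linarith [htu.1])
    have hcont : ContinuousOn (fun t => -s * remP (s + 1) M t) (Set.uIcc (0 : ℝ) u) := by
      refine (continuousOn_const.mul ((remP_continuousOn (s + 1) M).mono ?_))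
      intro t htu
      rw [Set.uIcc_of_le hu] at htu
      simp only [Set.mem_setOf_eq]
      linarith [htu.1]
    have hint : IntervalIntegrable (fun t => -s * remP (s + 1) M t)
        MeasureTheory.volume 0 u := hcont.intervalIntegrable
    have hrep : remP s (M + 1) u = ∫ t in (0:ℝ)..u, -s * remP (s + 1) M t := by
      rw [intervalIntegral.integral_eq_sub_of_hasDerivAt hderiv hint,
        remP_zero_eval, sub_zero]
    set D : ℝ := ‖s‖ * ((∏ i ∈ Finset.range M, ‖s + 1 + i‖) / M.factorial) with hD
    have hDnn : 0 ≤ D := by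
      apply mul_nonneg (norm_nonneg s)
      apply div_nonneg (Finset.prod_nonneg fun i _ => norm_nonneg _) (by positivity)
    have hbd : ∀ᵐ t ∂(MeasureTheory.volume.restrict (Set.uIoc (0:ℝ) u)),
        ‖-s * remP (s + 1) M t‖ ≤ D * t ^ M := by
      refine MeasureTheory.ae_restrict_of_forall_mem measurableSet_uIoc ?_
      intro t htu
      rw [Set.uIoc_of_le hu] at htu
      have h1 := ih (s + 1) t htu.1.le hs'
      have h2 : ∀ i ∈ Finset.range M, ‖s + 1 + i‖ = ‖(s + 1) + (i : ℂ)‖ := fun i _ => rfl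
      rw [norm_mul, norm_neg]
      calc ‖s‖ * ‖remP (s + 1) M t‖
          ≤ ‖s‖ * ((∏ i ∈ Finset.range M, ‖(s + 1) + (i : ℂ)‖) * t ^ M / M.factorial) := by
            exact mul_le_mul_of_nonneg_left h1 (norm_nonneg s)
        _ = D * t ^ M := by rw [hD]; ring
    have hgint : IntervalIntegrable (fun t : ℝ => D * t ^ M) MeasureTheory.volume 0 u :=
      (continuous_const.mul (continuous_pow M)).intervalIntegrable _ _
    have hnorm := intervalIntegral.norm_integral_le_abs_of_norm_le hbd hgint
    rw [← hrep] at hnorm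
    have hgval : (∫ t in (0:ℝ)..u, D * t ^ M) = D * (u ^ (M + 1) / (M + 1)) := by
      rw [intervalIntegral.integral_const_mul, integral_pow]
      norm_num
    rw [hgval] at hnorm
    have habs : |D * (u ^ (M + 1) / (M + 1))| = D * (u ^ (M + 1) / (M + 1)) := by
      apply _root_.abs_of_nonneg
      positivity
    rw [habs] at hnorm
    refine hnorm.trans (le_of_eq ?_)
    have hprod : ∏ i ∈ Finset.range (M + 1), ‖s + i‖
        = ‖s‖ * ∏ i ∈ Finset.range M, ‖s + 1 + i‖ := by
      rw [Finset.prod_range_succ']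
      simp only [Nat.cast_zero, add_zero]
      rw [mul_comm]
      congr 1
      refine Finset.prod_congr rfl fun i _ => ?_
      congr 1
      push_cast
      ring
    rw [hprod, Nat.factorial_succ, hD]
    have hM : (M.factorial : ℝ) ≠ 0 := Nat.cast_ne_zero.mpr (Nat.factorial_ne_zero M)
    have hM1 : ((M : ℝ) + 1) ≠ 0 := by positivity
    push_cast
    field_simp
    try exact Or.inl trivial

/-- The tail term functions. -/
noncomputable def Faux (X : ℝ) (M : ℕ) (s : ℂ) (j : ℕ) : ℂ :=
  ((((j : ℝ) + X) : ℝ) : ℂ) ^ (-(2 * s)) * remP s (M + 1) (((j : ℝ) + X)⁻¹)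

lemma Faux_eq {X : ℝ} (hX : 0 < X) (M : ℕ) (s : ℂ) (j : ℕ) :
    (((((j : ℝ) + X) * ((j : ℝ) + 1 + X)) : ℝ) : ℂ) ^ (-s)
      = (∑ m ∈ Finset.range (M + 1),
          genBinom (-s) m * ((((j : ℝ) + X : ℝ)) : ℂ) ^ (-(2 * s + m))) + Faux X M s j := by
  set a : ℝ := (j : ℝ) + X with ha
  have ha0 : 0 < a := by positivity
  have hane : ((a : ℝ) : ℂ) ≠ 0 := by exact_mod_cast ne_of_gt ha0
  have hu0 : (0:ℝ) < 1 + a⁻¹ := by positivity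
  have hsplit : ((j : ℝ) + 1 + X) = a * (1 + a⁻¹) := by
    rw [ha]; field_simp; ring
  have h2s : ((a : ℝ) : ℂ) ^ (-(2 * s)) = ((a:ℝ):ℂ) ^ (-s) * ((a:ℝ):ℂ) ^ (-s) := by
    rw [← Complex.cpow_add _ _ hane]
    congr 1
    ring
  have hL : (((a * ((j:ℝ) + 1 + X)) : ℝ) : ℂ) ^ (-s)
      = ((a:ℝ):ℂ) ^ (-(2*s)) * ((1 + a⁻¹ : ℝ) : ℂ) ^ (-s) := by
    rw [hsplit, Complex.ofReal_mul, mul_cpow_ofReal_nonneg ha0.le (by positivity),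
      Complex.ofReal_mul, mul_cpow_ofReal_nonneg ha0.le hu0.le, h2s]
    ring
  have hpow : ∀ m : ℕ, ((a : ℝ) : ℂ) ^ (-(2 * s + (m:ℂ)))
      = ((a:ℝ):ℂ) ^ (-(2*s)) * (((a⁻¹ ^ m : ℝ)) : ℂ) := by
    intro m
    rw [show -(2*s + (m:ℂ)) = -(2*s) + (-(m:ℂ)) by ring, Complex.cpow_add _ _ hane]
    congr 1
    rw [Complex.cpow_neg, Complex.cpow_natCast]
    push_cast
    rw [inv_pow]
  have hsum : ∑ m ∈ Finset.range (M + 1), genBinom (-s) m * ((a:ℝ):ℂ) ^ (-(2 * s + (m:ℂ)))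
      = ((a:ℝ):ℂ) ^ (-(2*s)) *
        ∑ m ∈ Finset.range (M + 1), genBinom (-s) m * (((a⁻¹ ^ m : ℝ)) : ℂ) := by
    rw [Finset.mul_sum]
    refine Finset.sum_congr rfl fun m _ => ?_
    rw [hpow m]
    ring
  rw [hL, hsum, Faux, remP]
  ring

lemma Faux_norm_le {X : ℝ} (hX : 1 ≤ X) (M : ℕ) {s : ℂ} (hs : -((M:ℝ) + 1) ≤ s.re) (j : ℕ) :
    ‖Faux X M s j‖ ≤ (‖s‖ + ((M:ℝ) + 1)) ^ (M + 1) / (M + 1).factorial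
      * ((j : ℝ) + X) ^ (-(2 * s.re) - ((M:ℝ) + 1)) := by
  set a : ℝ := (j : ℝ) + X with ha
  have ha1 : 1 ≤ a := by rw [ha]; have : (0:ℝ) ≤ (j:ℝ) := Nat.cast_nonneg j; linarith
  have ha0 : (0:ℝ) < a := lt_of_lt_of_le zero_lt_one ha1
  have hnorm1 : ‖((a : ℝ) : ℂ) ^ (-(2 * s))‖ = a ^ (-(2 * s.re)) := by
    rw [Complex.norm_cpow_eq_rpow_re_of_pos ha0]
    congr 1
    simp [Complex.mul_re]
  have hrem := remP_bound (M + 1) s a⁻¹ (inv_nonneg.2 ha0.le) (by push_cast at hs ⊢; linarith)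
  have hprodle : (∏ i ∈ Finset.range (M + 1), ‖s + i‖) ≤ (‖s‖ + ((M:ℝ) + 1)) ^ (M + 1) := by
    have : ∀ i ∈ Finset.range (M + 1), ‖s + (i:ℂ)‖ ≤ ‖s‖ + ((M:ℝ) + 1) := by
      intro i hi
      refine (norm_add_le _ _).trans ?_
      have h1 : ‖(i : ℂ)‖ = (i : ℝ) := by simp
      rw [h1]
      have : (i : ℝ) ≤ (M:ℝ) + 1 := by
        have := Finset.mem_range.mp hi
        exact_mod_cast this.le.trans (le_refl _)
      linarith
    calc (∏ i ∈ Finset.range (M + 1), ‖s + i‖)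
        ≤ ∏ _i ∈ Finset.range (M + 1), (‖s‖ + ((M:ℝ) + 1)) :=
          Finset.prod_le_prod (fun i _ => norm_nonneg _) this
      _ = (‖s‖ + ((M:ℝ) + 1)) ^ (M + 1) := by
          rw [Finset.prod_const, Finset.card_range]
  have hinvpow : (a⁻¹) ^ (M + 1) = a ^ (-((M:ℝ) + 1)) := by
    rw [← Real.rpow_natCast a⁻¹ (M + 1), Real.inv_rpow ha0.le, ← Real.rpow_neg ha0.le]
    norm_cast
  calc ‖Faux X M s j‖ = a ^ (-(2 * s.re)) * ‖remP s (M + 1) a⁻¹‖ := by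
        rw [Faux, norm_mul, hnorm1]
    _ ≤ a ^ (-(2 * s.re)) *
        ((∏ i ∈ Finset.range (M + 1), ‖s + i‖) * (a⁻¹) ^ (M + 1) / (M + 1).factorial) := by
        refine mul_le_mul_of_nonneg_left hrem (Real.rpow_nonneg ha0.le _)
    _ ≤ a ^ (-(2 * s.re)) *
        ((‖s‖ + ((M:ℝ) + 1)) ^ (M + 1) * (a⁻¹) ^ (M + 1) / (M + 1).factorial) := by
        refine mul_le_mul_of_nonneg_left ?_ (Real.rpow_nonneg ha0.le _)
        refine div_le_div_of_nonneg_right ?_ (by positivity)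
        exact mul_le_mul_of_nonneg_right hprodle (by positivity)
    _ = (‖s‖ + ((M:ℝ) + 1)) ^ (M + 1) / (M + 1).factorial
        * (a ^ (-(2 * s.re)) * a ^ (-((M:ℝ) + 1))) := by
        rw [hinvpow]; ring
    _ = (‖s‖ + ((M:ℝ) + 1)) ^ (M + 1) / (M + 1).factorial
        * a ^ (-(2 * s.re) - ((M:ℝ) + 1)) := by
        rw [← Real.rpow_add ha0]
        ring_nf

lemma summable_rpow_shift {X : ℝ} (hX : 0 < X) {c : ℝ} (hc : 1 < c) :
    Summable (fun j : ℕ => ((j : ℝ) + X) ^ (-c)) := by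
  refine ((Real.summable_one_div_nat_add_rpow X c).mpr hc).congr fun j => ?_
  have h0 : (0:ℝ) < (j : ℝ) + X := by positivity
  rw [abs_of_pos h0, one_div, ← Real.rpow_neg h0.le]

lemma Faux_differentiable {X : ℝ} (hX : 0 < X) (M : ℕ) (j : ℕ) :
    Differentiable ℂ (fun s => Faux X M s j) := by
  have ha0 : (0:ℝ) < (j:ℝ) + X := by positivity
  have hane : ((((j:ℝ) + X : ℝ)) : ℂ) ≠ 0 := by exact_mod_cast ha0.ne'
  have h1u : (0:ℝ) < 1 + ((j:ℝ) + X)⁻¹ := by positivity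
  have h1une : (((1 + ((j:ℝ) + X)⁻¹ : ℝ)) : ℂ) ≠ 0 := by exact_mod_cast h1u.ne'
  refine Differentiable.mul ?_ ?_
  · exact Differentiable.const_cpow ((differentiable_const (2:ℂ)).mul differentiable_id).neg
      (Or.inl hane)
  · refine Differentiable.sub ?_ ?_
    · exact Differentiable.const_cpow differentiable_id.neg (Or.inl h1une)
    · refine Differentiable.fun_sum fun m _ => Differentiable.mul_const ?_ _
      refine Differentiable.div_const ?_ _
      refine Differentiable.fun_finsetProd fun i _ => ?_
      exact (differentiable_id.neg).sub_const _


/-- For every `M ∈ ℕ` there exists `g_{M+1}` holomorphic on `{Re s > -M/2}` such that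
for every `s` with `Re s > 1/2`,
`∑_{j≥0} ((j+X)(j+1+X))^{-s} = ∑_{m=0}^M binom(-s,m) ζ(2s+m, X) + g_{M+1}(s)`,
where `X = x₀⁻¹`, `x₀ ∈ (0,1)`; moreover for every `γ > 0`,
`g_{M+1}(s) = O(|s|^{M+1})` as `|s| → ∞` in `{Re s ≥ -M/2 + γ}`. -/
theorem geometric_zeta_meromorphic_extension (x₀ : ℝ) (hx : x₀ ∈ Set.Ioo (0 : ℝ) 1)
    (M : ℕ) :
    ∃ g : ℂ → ℂ,
      DifferentiableOn ℂ g {s : ℂ | -(M : ℝ) / 2 < s.re} ∧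
      (∀ s : ℂ, 1 / 2 < s.re →
        ∑' j : ℕ, (((((j : ℝ) + x₀⁻¹) * ((j : ℝ) + 1 + x₀⁻¹)) : ℝ) : ℂ) ^ (-s) =
          (∑ m ∈ Finset.range (M + 1),
            genBinom (-s) m * hurwitzSeries (2 * s + m) (x₀⁻¹ : ℝ)) + g s) ∧
      (∀ γ : ℝ, 0 < γ → ∃ C R : ℝ, ∀ s : ℂ,
        -(M : ℝ) / 2 + γ ≤ s.re → R ≤ ‖s‖ → ‖g s‖ ≤ C * ‖s‖ ^ (M + 1)) := by
  obtain ⟨hx0, hx1⟩ := hx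
  set X : ℝ := x₀⁻¹ with hXdef
  have hX : 1 < X := (one_lt_inv₀ hx0).2 hx1
  have hX0 : 0 < X := lt_trans zero_lt_one hX
  have hMnn : (0:ℝ) ≤ (M:ℝ) := Nat.cast_nonneg M
  have ha1 : ∀ j : ℕ, 1 ≤ (j:ℝ) + X := by
    intro j
    have : (0:ℝ) ≤ (j:ℝ) := Nat.cast_nonneg j
    linarith
  refine ⟨fun s => ∑' j, Faux X M s j, ?_, ?_, ?_⟩
  · -- differentiability
    intro s₀ hs₀
    simp only [Set.mem_setOf_eq] at hs₀
    set σ : ℝ := (-(M:ℝ)/2 + s₀.re)/2 with hσ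
    have hσlt : -(M:ℝ)/2 < σ := by rw [hσ]; linarith
    have hσlt2 : σ < s₀.re := by rw [hσ]; linarith
    set U : Set ℂ := {s : ℂ | σ < s.re} ∩ Metric.ball s₀ 1 with hU
    have hUopen : IsOpen U :=
      (isOpen_lt continuous_const Complex.continuous_re).inter Metric.isOpen_ball
    have hs₀U : s₀ ∈ U := ⟨hσlt2, Metric.mem_ball_self one_pos⟩
    set K : ℝ := ((‖s₀‖ + 1) + ((M:ℝ)+1)) ^ (M+1) / (M+1).factorial with hK
    have hsum : Summable (fun j : ℕ => K * ((j:ℝ)+X) ^ (-(2*σ) - ((M:ℝ)+1))) := by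
      refine Summable.mul_left _ ?_
      have h1c : 1 < 2*σ + ((M:ℝ)+1) := by linarith
      refine (summable_rpow_shift hX0 h1c).congr fun j => ?_
      congr 1
      ring
    have hdiff : DifferentiableOn ℂ (fun s => ∑' j, Faux X M s j) U := by
      refine differentiableOn_tsum_of_summable_norm hsum
        (fun j => (Faux_differentiable hX0 M j).differentiableOn) hUopen ?_
      intro j s hsU
      obtain ⟨hsσ, hsball⟩ := hsU
      simp only [Set.mem_setOf_eq] at hsσ
      have hsre : -((M:ℝ)+1) ≤ s.re := by linarith
      refine (Faux_norm_le hX.le M hsre j).trans ?_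
      rw [hK]
      have hns : ‖s‖ ≤ ‖s₀‖ + 1 := by
        have := mem_ball_iff_norm.mp hsball
        calc ‖s‖ = ‖s₀ + (s - s₀)‖ := by ring_nf
          _ ≤ ‖s₀‖ + ‖s - s₀‖ := norm_add_le _ _
          _ ≤ ‖s₀‖ + 1 := by linarith
      have h2 : ((j:ℝ)+X) ^ (-(2*s.re) - ((M:ℝ)+1)) ≤ ((j:ℝ)+X) ^ (-(2*σ) - ((M:ℝ)+1)) :=
        Real.rpow_le_rpow_of_exponent_le (ha1 j) (by linarith)
      have hrnn : (0:ℝ) ≤ ((j:ℝ)+X) ^ (-(2*s.re) - ((M:ℝ)+1)) :=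
        Real.rpow_nonneg (by positivity) _
      refine mul_le_mul ?_ h2 hrnn (by positivity)
      gcongr <;> linarith
    exact (hdiff.differentiableAt (hUopen.mem_nhds hs₀U)).differentiableWithinAt
  · -- the identity
    intro s hs
    have hsre : -((M:ℝ)+1) ≤ s.re := by linarith
    have hFsum : Summable (fun j => Faux X M s j) := by
      apply Summable.of_norm
      refine Summable.of_nonneg_of_le (fun j => norm_nonneg _)
        (fun j => Faux_norm_le hX.le M hsre j) ?_
      refine Summable.mul_left _ ?_
      have h1c : 1 < 2*s.re + ((M:ℝ)+1) := by linarith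
      refine (summable_rpow_shift hX0 h1c).congr fun j => ?_
      congr 1
      ring
    have hterm : ∀ m ∈ Finset.range (M+1),
        Summable (fun j : ℕ => genBinom (-s) m * ((((j:ℝ)+X : ℝ)):ℂ) ^ (-(2*s + (m:ℂ)))) := by
      intro m hm
      refine Summable.mul_left _ ?_
      apply Summable.of_norm
      have hmnn : (0:ℝ) ≤ (m:ℝ) := Nat.cast_nonneg m
      have hsum2 : Summable (fun j : ℕ => ((j:ℝ)+X) ^ (-(2*s.re + (m:ℝ)))) :=
        summable_rpow_shift hX0 (by linarith)
      refine hsum2.congr fun j => ?_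
      have ha0 : (0:ℝ) < (j:ℝ)+X := by positivity
      rw [Complex.norm_cpow_eq_rpow_re_of_pos ha0]
      congr 1
      simp [Complex.add_re, Complex.mul_re]
    have hEq : ∀ j : ℕ, (((((j : ℝ) + X) * ((j : ℝ) + 1 + X)) : ℝ) : ℂ) ^ (-s)
        = (∑ m ∈ Finset.range (M+1),
            genBinom (-s) m * ((((j:ℝ)+X : ℝ)):ℂ) ^ (-(2*s + (m:ℂ)))) + Faux X M s j :=
      fun j => Faux_eq hX0 M s j
    rw [tsum_congr hEq, Summable.tsum_add (summable_sum hterm) hFsum]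
    congr 1
    rw [Summable.tsum_finsetSum hterm]
    refine Finset.sum_congr rfl fun m hm => ?_
    rw [tsum_mul_left]
    congr 1
    rw [hurwitzSeries]
    refine tsum_congr fun j => ?_
    congr 1
    push_cast
    ring
  · -- polynomial growth
    intro γ hγ
    have hTsum : Summable (fun j : ℕ => ((j:ℝ)+X) ^ (-(1+2*γ))) :=
      summable_rpow_shift hX0 (by linarith)
    set T : ℝ := ∑' j : ℕ, ((j:ℝ) + X) ^ (-(1+2*γ)) with hT
    have hTnn : 0 ≤ T := tsum_nonneg (fun j => Real.rpow_nonneg (by positivity) _)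
    refine ⟨((M:ℝ)+2) ^ (M+1) / (M+1).factorial * T, 1, fun s hsre hsnorm => ?_⟩
    have hsre' : -((M:ℝ)+1) ≤ s.re := by linarith
    have hb2 : ∀ j : ℕ,
        (‖s‖ + ((M:ℝ)+1)) ^ (M+1) / (M+1).factorial * ((j:ℝ)+X) ^ (-(2*s.re) - ((M:ℝ)+1))
        ≤ (‖s‖ + ((M:ℝ)+1)) ^ (M+1) / (M+1).factorial * ((j:ℝ)+X) ^ (-(1+2*γ)) := by
      intro j
      refine mul_le_mul_of_nonneg_left
        (Real.rpow_le_rpow_of_exponent_le (ha1 j) (by linarith)) (by positivity)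
    have hble : ∀ j : ℕ, ‖Faux X M s j‖
        ≤ (‖s‖ + ((M:ℝ)+1)) ^ (M+1) / (M+1).factorial * ((j:ℝ)+X) ^ (-(1+2*γ)) :=
      fun j => (Faux_norm_le hX.le M hsre' j).trans (hb2 j)
    have hsumb : Summable (fun j : ℕ =>
        (‖s‖ + ((M:ℝ)+1)) ^ (M+1) / (M+1).factorial * ((j:ℝ)+X) ^ (-(1+2*γ))) :=
      hTsum.mul_left _
    have hnsum : Summable (fun j => ‖Faux X M s j‖) :=
      Summable.of_nonneg_of_le (fun j => norm_nonneg _) hble hsumb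
    have hfac : (0:ℝ) < (M+1).factorial := by positivity
    calc ‖∑' j, Faux X M s j‖ ≤ ∑' j, ‖Faux X M s j‖ := norm_tsum_le_tsum_norm hnsum
      _ ≤ ∑' j : ℕ, (‖s‖ + ((M:ℝ)+1)) ^ (M+1) / (M+1).factorial * ((j:ℝ)+X) ^ (-(1+2*γ)) :=
          Summable.tsum_le_tsum hble hnsum hsumb
      _ = (‖s‖ + ((M:ℝ)+1)) ^ (M+1) / (M+1).factorial * T := tsum_mul_left
      _ ≤ (((M:ℝ)+2) * ‖s‖) ^ (M+1) / (M+1).factorial * T := by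
          have h1 : ‖s‖ + ((M:ℝ)+1) ≤ ((M:ℝ)+2) * ‖s‖ := by nlinarith
          gcongr
      _ = ((M:ℝ)+2) ^ (M+1) / (M+1).factorial * T * ‖s‖ ^ (M+1) := by
          rw [mul_pow]
          ring
end

section
/- Let A ⊆ ℝ^N be bounded with upper Minkowski (box) dimension D̄ < N, and let V_A(t) = |A_t| denote the Lebesgue measure of the t-neighborhood of A. Then for every m ∈ ℕ and every r > 0 with D̄ + r < Re s, there is a constant C > 0 such that the m-th iterated primitive V_A^[m](t) (vanishing to order m at 0) satisfies V_A^[m](t) ≤ C·t^{N - (D̄ + r) + m} for all t ∈ (0,δ]; in particular the integral ∫₀^δ t^{s-N-1-m} V_A^[m](t) dt converges absolutely for Re s > D̄. -/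
open MeasureTheory Filter Set

/-- The tube function `V_A(t) = |A_t|`: the Lebesgue measure of the `t`-neighborhood
of `A ⊆ ℝ^N`. -/
noncomputable def tubeVol {N : ℕ} (A : Set (EuclideanSpace ℝ (Fin N))) (t : ℝ) : ℝ :=
  (volume (Metric.thickening t A)).toReal

/-- The `m`-fold iterated primitive (vanishing to order `m` at `0`) of `F`. -/
noncomputable def iterPrim (F : ℝ → ℝ) : ℕ → ℝ → ℝ
  | 0, t => F t
  | (m + 1), t => ∫ u in Set.Ioc (0 : ℝ) t, iterPrim F m u

/-- The upper Minkowski (box) dimension of `A ⊆ ℝ^N`, defined as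
`limsup_{t→0⁺} (N - log V_A(t)/log t)`. -/
noncomputable def ubDim {N : ℕ} (A : Set (EuclideanSpace ℝ (Fin N))) : ℝ :=
  Filter.limsup (fun t : ℝ => (N : ℝ) - Real.log (tubeVol A t) / Real.log t)
    (nhdsWithin 0 (Set.Ioi 0))

private lemma tubeVol_nonneg' {N : ℕ} (A : Set (EuclideanSpace ℝ (Fin N))) (t : ℝ) :
    0 ≤ tubeVol A t := ENNReal.toReal_nonneg

private lemma tubeVol_mono {N : ℕ} {A : Set (EuclideanSpace ℝ (Fin N))}
    (hA : Bornology.IsBounded A) : Monotone (tubeVol A) := by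
  intro a b hab
  exact ENNReal.toReal_mono hA.thickening.measure_lt_top.ne
    (measure_mono (Metric.thickening_mono hab A))

private lemma tubeVol_pos {N : ℕ} {A : Set (EuclideanSpace ℝ (Fin N))}
    (hA : Bornology.IsBounded A) (hne : A.Nonempty) {t : ℝ} (ht : 0 < t) :
    0 < tubeVol A t := by
  obtain ⟨x, hx⟩ := hne
  refine ENNReal.toReal_pos ?_ hA.thickening.measure_lt_top.ne
  have h1 : 0 < volume (Metric.ball x t) := Metric.measure_ball_pos volume x ht
  exact (lt_of_lt_of_le h1 (measure_mono (Metric.ball_subset_thickening hx t))).ne'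

private lemma iterPrim_nonneg {F : ℝ → ℝ} (hF : ∀ t, 0 ≤ F t) :
    ∀ m t, 0 ≤ iterPrim F m t := by
  intro m
  induction m with
  | zero => exact hF
  | succ m ih =>
    intro t
    have h : iterPrim F (m + 1) t = ∫ u in Set.Ioc (0 : ℝ) t, iterPrim F m u := rfl
    rw [h]
    exact setIntegral_nonneg measurableSet_Ioc fun u _ => ih u

/-- For `A` nonempty bounded, near `0` the tube volume is bounded by `t^(N - D - r)`. -/
private lemma tube_small_bound {N : ℕ} {A : Set (EuclideanSpace ℝ (Fin N))}
    (hA : Bornology.IsBounded A) (hne : A.Nonempty) {r : ℝ} (hr : 0 < r) :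
    ∃ δ₁ > 0, ∀ t ∈ Set.Ioo (0 : ℝ) δ₁,
      tubeVol A t ≤ t ^ ((N : ℝ) - ubDim A - r) := by
  set f : ℝ → ℝ := fun t => (N : ℝ) - Real.log (tubeVol A t) / Real.log t with hf
  set M : ℝ := Real.log (tubeVol A 1 + 1) with hM
  set η : ℝ := Real.exp (-(|M| + 1)) with hη
  have hηpos : 0 < η := Real.exp_pos _
  have hbound : ∀ t ∈ Set.Ioo (0 : ℝ) η, f t ≤ (N : ℝ) + 1 := by
    intro t ht
    have hlog : Real.log t < -(|M| + 1) := by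
      have := Real.log_lt_log ht.1 ht.2
      rwa [hη, Real.log_exp] at this
    have hlog0 : Real.log t < 0 := by
      have : (0:ℝ) ≤ |M| := abs_nonneg M
      linarith
    have hV1 : tubeVol A t ≤ tubeVol A 1 + 1 := by
      have h1 : t ≤ 1 := by
        have : η ≤ 1 := by
          rw [hη]
          exact Real.exp_le_one_iff.mpr (by linarith [abs_nonneg M])
        linarith [ht.2]
      linarith [tubeVol_mono hA h1]
    have hlogV : Real.log (tubeVol A t) ≤ M := by
      rw [hM]
      exact Real.log_le_log (tubeVol_pos hA hne ht.1) hV1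
    have step2 : M / Real.log t ≤ Real.log (tubeVol A t) / Real.log t :=
      div_le_div_of_nonpos_of_le hlog0.le hlogV
    have step3 : (-1 : ℝ) ≤ M / Real.log t := by
      rw [le_div_iff_of_neg hlog0]
      have : M ≤ |M| := le_abs_self M
      linarith
    rw [hf]
    simp only
    linarith
  have hb : IsBoundedUnder (· ≤ ·) (nhdsWithin (0:ℝ) (Set.Ioi 0)) f := by
    refine ⟨(N : ℝ) + 1, eventually_map.mpr ?_⟩
    filter_upwards [Ioo_mem_nhdsGT_of_mem (Set.mem_Ico.mpr ⟨le_refl 0, hηpos⟩)] with t ht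
    exact hbound t ht
  have hlim : Filter.limsup f (nhdsWithin (0:ℝ) (Set.Ioi 0)) < ubDim A + r := by
    have : Filter.limsup f (nhdsWithin (0:ℝ) (Set.Ioi 0)) = ubDim A := rfl
    rw [this]; linarith
  have hev : ∀ᶠ t in nhdsWithin (0:ℝ) (Set.Ioi 0), f t < ubDim A + r :=
    eventually_lt_of_limsup_lt hlim hb
  have hev2 : ∀ᶠ t in nhdsWithin (0:ℝ) (Set.Ioi 0),
      f t < ubDim A + r ∧ t ∈ Set.Ioo (0:ℝ) η := by
    filter_upwards [hev, Ioo_mem_nhdsGT_of_mem (Set.mem_Ico.mpr ⟨le_refl 0, hηpos⟩)]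
      with t h1 h2 using ⟨h1, h2⟩
  obtain ⟨u, hu, hsub⟩ := mem_nhdsGT_iff_exists_Ioo_subset.mp hev2
  refine ⟨u, hu, ?_⟩
  intro t ht
  obtain ⟨h1, h2⟩ := hsub ht
  have hlog0 : Real.log t < 0 := by
    have hlog : Real.log t < -(|M| + 1) := by
      have := Real.log_lt_log h2.1 h2.2
      rwa [hη, Real.log_exp] at this
    have : (0:ℝ) ≤ |M| := abs_nonneg M
    linarith
  have hVpos : 0 < tubeVol A t := tubeVol_pos hA hne h2.1
  have h3 : (N : ℝ) - ubDim A - r < Real.log (tubeVol A t) / Real.log t := by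
    rw [hf] at h1; simp only at h1; linarith
  have h4 : Real.log (tubeVol A t) < ((N : ℝ) - ubDim A - r) * Real.log t :=
    (lt_div_iff_of_neg hlog0).mp h3
  have h5 : tubeVol A t < t ^ ((N : ℝ) - ubDim A - r) := by
    rw [Real.rpow_def_of_pos h2.1, mul_comm]
    calc tubeVol A t = Real.exp (Real.log (tubeVol A t)) := (Real.exp_log hVpos).symm
      _ < Real.exp (((N : ℝ) - ubDim A - r) * Real.log t) := Real.exp_lt_exp.mpr h4
  exact h5.le

/-- On every interval `(0, T]` the tube volume satisfies `V_A(t) ≤ C t^(N - D - r)`. -/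
private lemma tube_bound_all {N : ℕ} {A : Set (EuclideanSpace ℝ (Fin N))}
    (hA : Bornology.IsBounded A) {r : ℝ} (hr : 0 < r) :
    ∀ T > 0, ∃ C > 0, ∀ t ∈ Set.Ioc (0 : ℝ) T,
      tubeVol A t ≤ C * t ^ ((N : ℝ) - ubDim A - r) := by
  intro T hT
  set α : ℝ := (N : ℝ) - ubDim A - r with hαdef
  rcases Set.eq_empty_or_nonempty A with hAe | hne
  · refine ⟨1, one_pos, ?_⟩
    intro t ht
    have : tubeVol A t = 0 := by
      rw [hAe]; simp [tubeVol, Metric.thickening_empty]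
    rw [this, one_mul]
    exact (Real.rpow_pos_of_pos ht.1 α).le
  · obtain ⟨δ₁, hδ₁, hbd⟩ := tube_small_bound hA hne hr
    set c : ℝ := min (δ₁ ^ α) (T ^ α) with hc
    have hcpos : 0 < c := lt_min (Real.rpow_pos_of_pos hδ₁ α) (Real.rpow_pos_of_pos hT α)
    set C : ℝ := max 1 (tubeVol A T / c) with hC
    have hC1 : (1:ℝ) ≤ C := le_max_left _ _
    refine ⟨C, by linarith, ?_⟩
    intro t ht
    rcases lt_or_ge t δ₁ with h | h
    · calc tubeVol A t ≤ t ^ α := hbd t ⟨ht.1, h⟩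
        _ ≤ C * t ^ α := le_mul_of_one_le_left (Real.rpow_pos_of_pos ht.1 α).le hC1
    · have hct : c ≤ t ^ α := by
        rcases le_or_gt 0 α with hα | hα
        · exact (min_le_left _ _).trans (Real.rpow_le_rpow hδ₁.le h hα)
        · exact (min_le_right _ _).trans (Real.rpow_le_rpow_of_nonpos ht.1 ht.2 hα.le)
      calc tubeVol A t ≤ tubeVol A T := tubeVol_mono hA ht.2
        _ = tubeVol A T / c * c := (div_mul_cancel₀ _ hcpos.ne').symm
        _ ≤ C * c := mul_le_mul_of_nonneg_right (le_max_right _ _) hcpos.le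
        _ ≤ C * t ^ α := mul_le_mul_of_nonneg_left hct (by linarith)

/-- Main induction: measurability and power bounds for the iterated primitives. -/
private lemma iterPrim_bound {F : ℝ → ℝ} (hFm : Measurable F) (hF0 : ∀ t, 0 ≤ F t)
    {α : ℝ} (hα : (-1 : ℝ) < α)
    (hFb : ∀ T > 0, ∃ C > 0, ∀ t ∈ Set.Ioc (0 : ℝ) T, F t ≤ C * t ^ α) :
    ∀ m : ℕ, Measurable (iterPrim F m) ∧
      ∀ T > 0, ∃ C > 0, ∀ t ∈ Set.Ioc (0 : ℝ) T,
        iterPrim F m t ≤ C * t ^ (α + m) := by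
  intro m
  induction m with
  | zero =>
    refine ⟨hFm, ?_⟩
    simpa [iterPrim] using hFb
  | succ m ih =>
    obtain ⟨hmeas, hbd⟩ := ih
    have hm0 : (0:ℝ) ≤ (m:ℝ) := Nat.cast_nonneg m
    have hαm : (-1 : ℝ) < α + m := by linarith
    -- integrability of the rpow dominating function
    have hg : ∀ t : ℝ, 0 < t → ∀ C : ℝ,
        IntegrableOn (fun u : ℝ => C * u ^ (α + (m:ℝ))) (Set.Ioc 0 t) volume := by
      intro t ht C
      have h1 := (intervalIntegral.intervalIntegrable_rpow' (a := 0) (b := t) hαm).const_mul C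
      rwa [intervalIntegrable_iff, Set.uIoc_of_le ht.le] at h1
    -- integrability of iterPrim F m on (0, t]
    have hint : ∀ t : ℝ, 0 < t → IntegrableOn (iterPrim F m) (Set.Ioc 0 t) volume := by
      intro t ht
      obtain ⟨C, hCpos, hCb⟩ := hbd t ht
      refine (hg t ht C).mono' hmeas.aestronglyMeasurable ?_
      refine (ae_restrict_iff' measurableSet_Ioc).mpr (Filter.Eventually.of_forall ?_)
      intro u hu
      rw [Real.norm_eq_abs, abs_of_nonneg (iterPrim_nonneg hF0 m u)]
      exact hCb u hu
    have hrec : ∀ t : ℝ, iterPrim F (m + 1) t = ∫ u in Set.Ioc (0 : ℝ) t, iterPrim F m u :=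
      fun _ => rfl
    have hmono : Monotone (iterPrim F (m + 1)) := by
      intro a b hab
      rw [hrec a, hrec b]
      rcases le_or_gt b 0 with hb | hb
      · rw [Set.Ioc_eq_empty (by simp; linarith), Set.Ioc_eq_empty (by simp; linarith)]
      · refine setIntegral_mono_set (hint b hb)
          (Filter.Eventually.of_forall fun u => iterPrim_nonneg hF0 m u)
          (HasSubset.Subset.eventuallyLE (Set.Ioc_subset_Ioc_right hab))
    refine ⟨hmono.measurable, ?_⟩
    intro T hT
    obtain ⟨C, hCpos, hCb⟩ := hbd T hT
    refine ⟨C / (α + m + 1), div_pos hCpos (by linarith), ?_⟩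
    intro t ht
    have h2 : ∫ u in Set.Ioc (0:ℝ) t, C * u ^ (α + (m:ℝ)) =
        C / (α + m + 1) * t ^ (α + ((m:ℕ) + 1 : ℕ)) := by
      rw [integral_const_mul]
      rw [← intervalIntegral.integral_of_le ht.1.le]
      rw [integral_rpow (Or.inl hαm)]
      rw [Real.zero_rpow (by linarith)]
      rw [show (α + (((m:ℕ) + 1 : ℕ) : ℝ)) = α + (m:ℝ) + 1 by push_cast; ring]
      ring
    rw [hrec t]
    refine le_trans (integral_mono_of_nonneg
      (Filter.Eventually.of_forall fun u => iterPrim_nonneg hF0 m u)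
      (hg t ht.1 C) ?_) (le_of_eq h2)
    refine (ae_restrict_iff' measurableSet_Ioc).mpr (Filter.Eventually.of_forall ?_)
    intro u hu
    exact hCb u ⟨hu.1, hu.2.trans ht.2⟩

/-- Let `A ⊆ ℝ^N` be bounded with upper Minkowski dimension `D̄ < N`. Then for every
`m ∈ ℕ` and every `r > 0` there is `C > 0` with
`V_A^[m](t) ≤ C·t^{N-(D̄+r)+m}` on `(0,δ]`; in particular
`∫₀^δ t^{s-N-1-m} V_A^[m](t) dt` converges absolutely whenever `Re s > D̄`. -/
theorem iterPrim_tube_bound_and_integrable {N : ℕ} (A : Set (EuclideanSpace ℝ (Fin N)))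
    (hA : Bornology.IsBounded A) (hD : ubDim A < N) (δ : ℝ) (hδ : 0 < δ) (m : ℕ) :
    (∀ r : ℝ, 0 < r → ∃ C > 0, ∀ t ∈ Set.Ioc (0 : ℝ) δ,
      iterPrim (tubeVol A) m t ≤ C * t ^ ((N : ℝ) - (ubDim A + r) + m)) ∧
    (∀ s : ℂ, ubDim A < s.re →
      MeasureTheory.IntegrableOn
        (fun t : ℝ => (t : ℂ) ^ (s - N - 1 - m) * ((iterPrim (tubeVol A) m t : ℝ) : ℂ))
        (Set.Ioc (0 : ℝ) δ)) := by
  have hFm : Measurable (tubeVol A) := (tubeVol_mono hA).measurable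
  have hF0 := tubeVol_nonneg' A
  constructor
  · -- part 1
    intro r hr
    set r' : ℝ := min r (1/2) with hr'def
    have hr'0 : 0 < r' := lt_min hr (by norm_num)
    have hr'le : r' ≤ r := min_le_left _ _
    have hα : (-1 : ℝ) < (N : ℝ) - ubDim A - r' := by
      have h1 : r' ≤ 1/2 := min_le_right _ _
      linarith
    obtain ⟨_, hbd⟩ := iterPrim_bound hFm hF0 hα (tube_bound_all hA hr'0) m
    obtain ⟨C, hC, hCb⟩ := hbd δ hδ
    set K : ℝ := (max 1 δ) ^ (r - r') with hK
    have hKpos : 0 < K := Real.rpow_pos_of_pos (lt_of_lt_of_le one_pos (le_max_left _ _)) _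
    refine ⟨C * K, mul_pos hC hKpos, ?_⟩
    intro t ht
    have h1 := hCb t ht
    have hsplit : t ^ ((N : ℝ) - ubDim A - r' + m) =
        t ^ ((N : ℝ) - (ubDim A + r) + m) * t ^ (r - r') := by
      rw [← Real.rpow_add ht.1]
      congr 1
      ring
    have htK : t ^ (r - r') ≤ K := by
      rw [hK]
      exact Real.rpow_le_rpow ht.1.le (ht.2.trans (le_max_right _ _)) (by linarith)
    calc iterPrim (tubeVol A) m t ≤ C * t ^ ((N : ℝ) - ubDim A - r' + m) := h1
      _ = C * (t ^ ((N : ℝ) - (ubDim A + r) + m) * t ^ (r - r')) := by rw [hsplit]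
      _ ≤ C * (t ^ ((N : ℝ) - (ubDim A + r) + m) * K) := by
          refine mul_le_mul_of_nonneg_left (mul_le_mul_of_nonneg_left htK ?_) hC.le
          exact (Real.rpow_pos_of_pos ht.1 _).le
      _ = C * K * t ^ ((N : ℝ) - (ubDim A + r) + m) := by ring
  · -- part 2
    intro s hs
    set r' : ℝ := min ((s.re - ubDim A) / 2) (1/2) with hr'def
    have hr'0 : 0 < r' := lt_min (by linarith) (by norm_num)
    have hα : (-1 : ℝ) < (N : ℝ) - ubDim A - r' := by
      have h1 : r' ≤ 1/2 := min_le_right _ _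
      linarith
    obtain ⟨hmeas, hbd⟩ := iterPrim_bound hFm hF0 hα (tube_bound_all hA hr'0) m
    obtain ⟨C, hC, hCb⟩ := hbd δ hδ
    set e : ℝ := s.re - ubDim A - r' - 1 with he
    have hegt : (-1 : ℝ) < e := by
      have h1 : r' ≤ (s.re - ubDim A) / 2 := min_le_left _ _
      rw [he]
      linarith
    have hg : IntegrableOn (fun t : ℝ => C * t ^ e) (Set.Ioc 0 δ) volume := by
      have h1 := (intervalIntegral.intervalIntegrable_rpow' (a := 0) (b := δ) hegt).const_mul C
      rwa [intervalIntegrable_iff, Set.uIoc_of_le hδ.le] at h1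
    refine hg.mono' ?_ ?_
    · apply Measurable.aestronglyMeasurable
      apply Measurable.mul
      · have : (fun t : ℝ => (t : ℂ) ^ (s - N - 1 - m)) =
            fun t : ℝ => Complex.cpow (t : ℂ) (s - N - 1 - m) := rfl
        fun_prop
      · exact Complex.measurable_ofReal.comp hmeas
    · filter_upwards [ae_restrict_mem measurableSet_Ioc] with t ht
      rw [norm_mul]
      have h1 : ‖(t : ℂ) ^ (s - (N : ℂ) - 1 - (m : ℂ))‖ = t ^ (s.re - N - 1 - m) := by
        rw [Complex.norm_cpow_eq_rpow_re_of_pos ht.1]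
        congr 1
      have h2 : ‖((iterPrim (tubeVol A) m t : ℝ) : ℂ)‖ = iterPrim (tubeVol A) m t := by
        rw [Complex.norm_real, Real.norm_eq_abs, abs_of_nonneg (iterPrim_nonneg hF0 m t)]
      rw [h1, h2]
      have hpow : (0:ℝ) ≤ t ^ (s.re - N - 1 - m) := (Real.rpow_pos_of_pos ht.1 _).le
      calc t ^ (s.re - (N:ℝ) - 1 - m) * iterPrim (tubeVol A) m t
          ≤ t ^ (s.re - (N:ℝ) - 1 - m) * (C * t ^ ((N : ℝ) - ubDim A - r' + m)) :=
            mul_le_mul_of_nonneg_left (hCb t ht) hpow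
        _ = C * (t ^ (s.re - (N:ℝ) - 1 - m) * t ^ ((N : ℝ) - ubDim A - r' + m)) := by ring
        _ = C * t ^ e := by
            rw [← Real.rpow_add ht.1]
            congr 1
            rw [he]; ring
end

section
/- Functional equation for iterated primitives of the tube function: for a bounded set A ⊆ ℝ^N, every m ∈ ℕ, δ > 0 and s ∈ ℂ with Re s > upper box dimension of A, the tube zeta function ζ̃_A(s) = ∫₀^δ t^{s-N-1} V_A(t) dt satisfies ζ̃_A(s) = ∑_{n=1}^{m} (N-s+1)_{n-1} δ^{s-N-n} V_A^[n](δ) + (N-s+1)_m ∫₀^δ t^{s-N-1-m} V_A^[m](t) dt, where (x)_m = x(x+1)⋯(x+m-1) is the rising factorial with (x)₀ = 1. -/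
open MeasureTheory Filter Set Finset

/-- The rising factorial (Pochhammer symbol) `(x)_m = x(x+1)⋯(x+m-1)`, with `(x)₀ = 1`. -/
noncomputable def risingFact (x : ℂ) (m : ℕ) : ℂ := ∏ i ∈ Finset.range m, (x + i)

namespace TubeZetaAux

lemma integral_ofReal' {μ : Measure ℝ} {f : ℝ → ℝ} :
    (∫ x, ((f x : ℝ) : ℂ) ∂μ) = (((∫ x, f x ∂μ) : ℝ) : ℂ) :=
  integral_ofReal

lemma measurable_ofReal_cpow (a : ℂ) : Measurable (fun u : ℝ => (u : ℂ) ^ a) :=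
  measurable_of_continuousOn_compl_singleton 0 (fun x hx =>
    (Complex.continuousAt_ofReal_cpow_const x a (Or.inr hx)).continuousWithinAt)

lemma norm_cpow_mul {a : ℂ} {u : ℝ} (hu : 0 < u) {g : ℝ} (hg : 0 ≤ g) :
    ‖(u : ℂ) ^ a * (g : ℂ)‖ = u ^ a.re * g := by
  rw [norm_mul, Complex.norm_real, Real.norm_eq_abs,
    Complex.norm_cpow_eq_rpow_re_of_pos hu, abs_of_nonneg hg]

lemma integrableOn_rpow {r δ : ℝ} (hδ : 0 ≤ δ) (hr : -1 < r) :
    IntegrableOn (fun u : ℝ => u ^ r) (Ioc 0 δ) := by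
  exact (intervalIntegrable_iff_integrableOn_Ioc_of_le hδ).1
    (intervalIntegral.intervalIntegrable_rpow' hr)

lemma integrableOn_cpow_mul {a : ℂ} {β C δ : ℝ} (hδ : 0 < δ) (hβa : -1 < β + a.re)
    {G : ℝ → ℝ} (hGm : Measurable G) (hG0 : ∀ u, 0 ≤ G u)
    (hGle : ∀ u ∈ Ioc (0 : ℝ) δ, G u ≤ C * u ^ β) :
    IntegrableOn (fun u : ℝ => (u : ℂ) ^ a * ((G u : ℝ) : ℂ)) (Ioc 0 δ) := by
  have hints : IntegrableOn (fun u : ℝ => C * u ^ (β + a.re)) (Ioc 0 δ) :=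
    (integrableOn_rpow hδ.le hβa).const_mul C
  refine Integrable.mono' hints
    (((measurable_ofReal_cpow a).mul (Complex.measurable_ofReal.comp hGm)).aestronglyMeasurable) ?_
  refine (ae_restrict_iff' measurableSet_Ioc).2 (Eventually.of_forall fun u hu => ?_)
  rw [norm_cpow_mul hu.1 (hG0 u)]
  calc u ^ a.re * G u ≤ u ^ a.re * (C * u ^ β) :=
        mul_le_mul_of_nonneg_left (hGle u hu) (Real.rpow_nonneg hu.1.le _)
    _ = C * u ^ (β + a.re) := by rw [Real.rpow_add hu.1]; ring

lemma integrableOn_of_monotone {G : ℝ → ℝ} (hG : Monotone G) (hG0 : ∀ u, 0 ≤ G u) (x y : ℝ) :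
    IntegrableOn G (Ioc x y) := by
  have hconst : IntegrableOn (fun _ : ℝ => G y) (Ioc x y) volume :=
    integrableOn_const measure_Ioc_lt_top.ne
  refine Integrable.mono' hconst hG.measurable.aestronglyMeasurable ?_
  refine (ae_restrict_iff' measurableSet_Ioc).2 (Eventually.of_forall fun u hu => ?_)
  rw [Real.norm_eq_abs, abs_of_nonneg (hG0 u)]
  exact hG hu.2

lemma prim_bound {β C δ : ℝ} (hβ : -1 < β)
    {G : ℝ → ℝ} (hGm : Measurable G) (hG0 : ∀ u, 0 ≤ G u)
    (hGle : ∀ u ∈ Ioc (0 : ℝ) δ, G u ≤ C * u ^ β) {t : ℝ} (ht : t ∈ Ioc (0 : ℝ) δ) :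
    (∫ u in Ioc (0 : ℝ) t, G u) ≤ (C / (β + 1)) * t ^ (β + 1) := by
  have hβ1 : 0 < β + 1 := by linarith
  have hrint : IntegrableOn (fun u : ℝ => C * u ^ β) (Ioc 0 t) :=
    (integrableOn_rpow ht.1.le hβ).const_mul C
  have hGint : IntegrableOn G (Ioc 0 t) := by
    refine Integrable.mono' hrint hGm.aestronglyMeasurable ?_
    refine (ae_restrict_iff' measurableSet_Ioc).2 (Eventually.of_forall fun u hu => ?_)
    rw [Real.norm_eq_abs, abs_of_nonneg (hG0 u)]
    exact hGle u ⟨hu.1, hu.2.trans ht.2⟩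
  have h1 : (∫ u in Ioc (0 : ℝ) t, G u) ≤ ∫ u in Ioc (0 : ℝ) t, C * u ^ β :=
    setIntegral_mono_on hGint hrint measurableSet_Ioc
      (fun u hu => hGle u ⟨hu.1, hu.2.trans ht.2⟩)
  have h2 : (∫ u in Ioc (0 : ℝ) t, C * u ^ β) = C / (β + 1) * t ^ (β + 1) := by
    rw [← intervalIntegral.integral_of_le ht.1.le, intervalIntegral.integral_const_mul,
      integral_rpow (Or.inl hβ), Real.zero_rpow (ne_of_gt hβ1)]
    ring
  linarith

/-- The integration-by-parts (via Fubini) step. -/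
lemma step {a : ℂ} {β C δ : ℝ} (hδ : 0 < δ) (hβ : -1 < β) (hβa : -1 < β + a.re)
    {G : ℝ → ℝ} (hGmono : Monotone G) (hG0 : ∀ u, 0 ≤ G u)
    (hGle : ∀ u ∈ Ioc (0 : ℝ) δ, G u ≤ C * u ^ β) :
    (∫ u in Ioc (0 : ℝ) δ, (u : ℂ) ^ a * ((G u : ℝ) : ℂ))
      = (δ : ℂ) ^ a * (((∫ u in Ioc (0 : ℝ) δ, G u) : ℝ) : ℂ)
        - a * ∫ t in Ioc (0 : ℝ) δ, (t : ℂ) ^ (a - 1) *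
            (((∫ u in Ioc (0 : ℝ) t, G u) : ℝ) : ℂ) := by
  have hGm : Measurable G := hGmono.measurable
  rcases eq_or_ne a 0 with rfl | ha
  · simp only [Complex.cpow_zero, one_mul, zero_mul, sub_zero]
    exact integral_ofReal
  -- notation
  set μ : Measure ℝ := volume.restrict (Ioc (0 : ℝ) δ) with hμ
  set g : ℝ × ℝ → ℂ :=
    fun p => Set.indicator {q : ℝ × ℝ | q.2 ≤ q.1}
      (fun q => a * (q.1 : ℂ) ^ (a - 1) * ((G q.2 : ℝ) : ℂ)) p with hg
  have hSmeas : MeasurableSet {q : ℝ × ℝ | q.2 ≤ q.1} :=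
    measurableSet_le measurable_snd measurable_fst
  have hgmeas : Measurable g := by
    refine Measurable.indicator ?_ hSmeas
    exact (((measurable_ofReal_cpow (a - 1)).comp measurable_fst).const_mul a).mul
      ((Complex.measurable_ofReal.comp hGm).comp measurable_snd)
  have hgval : ∀ t u : ℝ, g (t, u) = if u ≤ t then a * (t : ℂ) ^ (a - 1) * ((G u : ℝ) : ℂ) else 0 := by
    intro t u
    simp [hg, Set.indicator_apply]
  -- integrability of g on the product
  have hGintOn : ∀ x y : ℝ, IntegrableOn G (Ioc x y) := integrableOn_of_monotone hGmono hG0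
  have hslice : ∀ t : ℝ, Integrable (fun u => g (t, u)) μ := by
    intro t
    have hconst : IntegrableOn (fun _ : ℝ => ‖a * (t : ℂ) ^ (a - 1)‖ * G δ)
        (Ioc (0 : ℝ) δ) volume := integrableOn_const measure_Ioc_lt_top.ne
    refine Integrable.mono' hconst ?_ ?_
    · exact (hgmeas.comp (measurable_const.prodMk measurable_id)).aestronglyMeasurable
    · refine (ae_restrict_iff' measurableSet_Ioc).2 (Eventually.of_forall fun u hu => ?_)
      simp only [hgval]
      split_ifs with h
      · rw [norm_mul, Complex.norm_real, Real.norm_eq_abs, abs_of_nonneg (hG0 u)]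
        exact mul_le_mul_of_nonneg_left (hGmono hu.2) (norm_nonneg _)
      · simp only [norm_zero]
        exact mul_nonneg (norm_nonneg _) (hG0 δ)
  have hnormbound : ∀ t ∈ Ioc (0 : ℝ) δ,
      (∫ u, ‖g (t, u)‖ ∂μ) ≤ (‖a‖ * (C / (β + 1))) * t ^ (β + a.re) := by
    intro t ht
    have hind : IntegrableOn (fun u : ℝ => ‖a‖ * t ^ (a.re - 1) * G u) (Ioc 0 t) :=
      (hGintOn 0 t).const_mul _
    have hindμ : Integrable ((Ioc (0 : ℝ) t).indicator (fun u => ‖a‖ * t ^ (a.re - 1) * G u)) μ :=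
      (hind.integrable_indicator measurableSet_Ioc).restrict
    have hle : (∫ u, ‖g (t, u)‖ ∂μ) ≤
        ∫ u, (Ioc (0 : ℝ) t).indicator (fun u => ‖a‖ * t ^ (a.re - 1) * G u) u ∂μ := by
      refine integral_mono_of_nonneg (Eventually.of_forall fun u => norm_nonneg _) hindμ ?_
      refine (ae_restrict_iff' measurableSet_Ioc).2 (Eventually.of_forall fun u hu => ?_)
      simp only [hgval]
      split_ifs with h
      · rw [Set.indicator_of_mem (Set.mem_Ioc.mpr ⟨hu.1, h⟩), mul_assoc, norm_mul,
          norm_cpow_mul ht.1 (hG0 u), Complex.sub_re, Complex.one_re]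
        rw [mul_assoc]
      · rcases le_or_gt u 0 with h0 | h0
        · exact absurd hu.1 (not_lt.2 h0)
        · rw [Set.indicator_of_notMem (fun hc => h hc.2), norm_zero]
    have heval : (∫ u, (Ioc (0 : ℝ) t).indicator (fun u => ‖a‖ * t ^ (a.re - 1) * G u) u ∂μ)
        = ‖a‖ * t ^ (a.re - 1) * ∫ u in Ioc (0 : ℝ) t, G u := by
      rw [hμ, integral_indicator measurableSet_Ioc, Measure.restrict_restrict measurableSet_Ioc,
        inter_eq_self_of_subset_left (Ioc_subset_Ioc_right ht.2), integral_const_mul]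
    have hprim : (∫ u in Ioc (0 : ℝ) t, G u) ≤ (C / (β + 1)) * t ^ (β + 1) :=
      prim_bound hβ hGm hG0 hGle ht
    have : ‖a‖ * t ^ (a.re - 1) * (∫ u in Ioc (0 : ℝ) t, G u)
        ≤ ‖a‖ * t ^ (a.re - 1) * ((C / (β + 1)) * t ^ (β + 1)) := by
      exact mul_le_mul_of_nonneg_left hprim
        (mul_nonneg (norm_nonneg _) (Real.rpow_nonneg ht.1.le _))
    calc (∫ u, ‖g (t, u)‖ ∂μ) ≤ _ := hle
      _ = _ := heval
      _ ≤ ‖a‖ * t ^ (a.re - 1) * ((C / (β + 1)) * t ^ (β + 1)) := this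
      _ = ‖a‖ * (C / (β + 1)) * (t ^ (a.re - 1) * t ^ (β + 1)) := by ring
      _ = (‖a‖ * (C / (β + 1))) * t ^ (β + a.re) := by
          rw [← Real.rpow_add ht.1, show a.re - 1 + (β + 1) = β + a.re by ring]
  have hgasm : AEStronglyMeasurable g (μ.prod μ) := hgmeas.aestronglyMeasurable
  have hgint : Integrable g (μ.prod μ) := by
    refine (integrable_prod_iff hgasm).2 ⟨Eventually.of_forall hslice, ?_⟩
    have hdom : Integrable (fun t : ℝ => (‖a‖ * (C / (β + 1))) * t ^ (β + a.re)) μ :=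
      (integrableOn_rpow hδ.le hβa).const_mul _
    refine Integrable.mono' hdom hgasm.norm.integral_prod_right' ?_
    refine (ae_restrict_iff' measurableSet_Ioc).2 (Eventually.of_forall fun t ht => ?_)
    rw [Real.norm_eq_abs, abs_of_nonneg (integral_nonneg fun u => norm_nonneg _)]
    exact hnormbound t ht
  -- pointwise identification of the inner integrals
  have key1 : ∀ t ∈ Ioc (0 : ℝ) δ,
      (∫ u, g (t, u) ∂μ)
        = a * ((t : ℂ) ^ (a - 1) * (((∫ u in Ioc (0 : ℝ) t, G u) : ℝ) : ℂ)) := by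
    intro t ht
    have h1 : (∫ u, g (t, u) ∂μ)
        = ∫ u in Ioc (0 : ℝ) δ,
            (Ioc (0 : ℝ) t).indicator (fun u => a * (t : ℂ) ^ (a - 1) * ((G u : ℝ) : ℂ)) u := by
      refine setIntegral_congr_fun measurableSet_Ioc (fun u hu => ?_)
      simp only [hgval]
      split_ifs with h
      · rw [Set.indicator_of_mem (Set.mem_Ioc.mpr ⟨hu.1, h⟩)]
      · rw [Set.indicator_of_notMem (fun hc => h hc.2)]
    rw [h1, integral_indicator measurableSet_Ioc, Measure.restrict_restrict measurableSet_Ioc,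
      inter_eq_self_of_subset_left (Ioc_subset_Ioc_right ht.2), integral_const_mul,
      integral_ofReal', mul_assoc]
  have key2 : ∀ u ∈ Ioc (0 : ℝ) δ,
      (∫ t, g (t, u) ∂μ) = ((δ : ℂ) ^ a - (u : ℂ) ^ a) * ((G u : ℝ) : ℂ) := by
    intro u hu
    have hsplit : Ioc (0 : ℝ) δ = Ioc 0 u ∪ Ioc u δ := (Ioc_union_Ioc_eq_Ioc hu.1.le hu.2).symm
    have hint1 : IntegrableOn (fun t => g (t, u)) (Ioc 0 u) := by
      have hconst : IntegrableOn (fun _ : ℝ => ‖a‖ * u ^ (a.re - 1) * G u)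
          (Ioc (0 : ℝ) u) volume := integrableOn_const measure_Ioc_lt_top.ne
      refine Integrable.mono' hconst ?_ ?_
      · exact (hgmeas.comp (measurable_id.prodMk measurable_const)).aestronglyMeasurable
      · refine (ae_restrict_iff' measurableSet_Ioc).2 (Eventually.of_forall fun t htm => ?_)
        simp only [hgval]
        split_ifs with h
        · -- then u ≤ t ≤ u so t = u
          have htu : t = u := le_antisymm htm.2 h
          rw [htu, mul_assoc, norm_mul, norm_cpow_mul hu.1 (hG0 u), Complex.sub_re,
            Complex.one_re, mul_assoc]
        · rw [norm_zero]
          exact mul_nonneg (mul_nonneg (norm_nonneg _)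
            (Real.rpow_nonneg hu.1.le _)) (hG0 u)
    have hint2 : IntegrableOn (fun t => g (t, u)) (Ioc u δ) := by
      have : EqOn (fun t => g (t, u)) (fun t => (a * ((G u : ℝ) : ℂ)) * (t : ℂ) ^ (a - 1))
          (Ioc u δ) := by
        intro t htm
        show g (t, u) = _
        rw [hgval t u, if_pos htm.1.le]
        ring
      refine (IntegrableOn.congr_fun ?_ this.symm measurableSet_Ioc)
      refine Integrable.const_mul ?_ _
      refine (intervalIntegrable_iff_integrableOn_Ioc_of_le hu.2).1 ?_
      refine intervalIntegral.intervalIntegrable_cpow ?_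
      exact Or.inr (Set.notMem_uIcc_of_lt hu.1 (hu.1.trans_le hu.2))
    have hpart1 : (∫ t in Ioc (0 : ℝ) u, g (t, u)) = 0 := by
      rw [integral_Ioc_eq_integral_Ioo]
      rw [setIntegral_congr_fun measurableSet_Ioo
        (fun t htm => by show g (t, u) = _; rw [hgval t u, if_neg (not_le.2 htm.2)]; rfl :
          EqOn (fun t => g (t, u)) 0 _)]
      simp
    have hcpow : (∫ t in Ioc (u : ℝ) δ, (t : ℂ) ^ (a - 1))
        = ((δ : ℂ) ^ a - (u : ℂ) ^ a) / a := by
      rw [← intervalIntegral.integral_of_le hu.2, integral_cpow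
        (Or.inr ⟨by intro h; apply ha; linear_combination h,
          Set.notMem_uIcc_of_lt hu.1 (hu.1.trans_le hu.2)⟩)]
      rw [show a - 1 + 1 = a by ring]
    have hpart2 : (∫ t in Ioc (u : ℝ) δ, g (t, u))
        = ((δ : ℂ) ^ a - (u : ℂ) ^ a) * ((G u : ℝ) : ℂ) := by
      rw [setIntegral_congr_fun measurableSet_Ioc
        (fun t htm => by show g (t, u) = _; rw [hgval t u, if_pos htm.1.le]; ring :
          EqOn (fun t => g (t, u)) (fun t => (a * ((G u : ℝ) : ℂ)) * (t : ℂ) ^ (a - 1)) _),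
        integral_const_mul, hcpow]
      field_simp
    calc (∫ t, g (t, u) ∂μ) = ∫ t in Ioc (0 : ℝ) u ∪ Ioc u δ, g (t, u) := by rw [hμ, ← hsplit]
      _ = (∫ t in Ioc (0 : ℝ) u, g (t, u)) + ∫ t in Ioc (u : ℝ) δ, g (t, u) :=
          setIntegral_union (Set.Ioc_disjoint_Ioc_of_le le_rfl) measurableSet_Ioc hint1 hint2
      _ = ((δ : ℂ) ^ a - (u : ℂ) ^ a) * ((G u : ℝ) : ℂ) := by rw [hpart1, hpart2, zero_add]
  -- integrabilities for the final algebra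
  have int_left : IntegrableOn (fun u : ℝ => (u : ℂ) ^ a * ((G u : ℝ) : ℂ)) (Ioc 0 δ) :=
    integrableOn_cpow_mul hδ hβa hGm hG0 hGle
  have int_G : IntegrableOn (fun u : ℝ => ((G u : ℝ) : ℂ)) (Ioc 0 δ) :=
    (integrableOn_of_monotone hGmono hG0 0 δ).ofReal
  -- the computation
  have hswap : (∫ t, (∫ u, g (t, u) ∂μ) ∂μ) = ∫ u, (∫ t, g (t, u) ∂μ) ∂μ :=
    integral_integral_swap (f := fun t u => g (t, u)) hgint
  have hchain : a * (∫ t in Ioc (0 : ℝ) δ, (t : ℂ) ^ (a - 1) *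
      (((∫ u in Ioc (0 : ℝ) t, G u) : ℝ) : ℂ))
      = (δ : ℂ) ^ a * (((∫ u in Ioc (0 : ℝ) δ, G u) : ℝ) : ℂ)
        - ∫ u in Ioc (0 : ℝ) δ, (u : ℂ) ^ a * ((G u : ℝ) : ℂ) := by
    have e1 : a * (∫ t in Ioc (0 : ℝ) δ, (t : ℂ) ^ (a - 1) *
        (((∫ u in Ioc (0 : ℝ) t, G u) : ℝ) : ℂ)) = ∫ t, (∫ u, g (t, u) ∂μ) ∂μ := by
      rw [← integral_const_mul]
      exact setIntegral_congr_fun measurableSet_Ioc (fun t ht => (key1 t ht).symm)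
    have e2 : (∫ u, (∫ t, g (t, u) ∂μ) ∂μ)
        = ∫ u in Ioc (0 : ℝ) δ, ((δ : ℂ) ^ a - (u : ℂ) ^ a) * ((G u : ℝ) : ℂ) :=
      setIntegral_congr_fun measurableSet_Ioc (fun u hu => key2 u hu)
    have e3 : (∫ u in Ioc (0 : ℝ) δ, ((δ : ℂ) ^ a - (u : ℂ) ^ a) * ((G u : ℝ) : ℂ))
        = (δ : ℂ) ^ a * (((∫ u in Ioc (0 : ℝ) δ, G u) : ℝ) : ℂ)
          - ∫ u in Ioc (0 : ℝ) δ, (u : ℂ) ^ a * ((G u : ℝ) : ℂ) := by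
      have : ∀ u : ℝ, ((δ : ℂ) ^ a - (u : ℂ) ^ a) * ((G u : ℝ) : ℂ)
          = (δ : ℂ) ^ a * ((G u : ℝ) : ℂ) - (u : ℂ) ^ a * ((G u : ℝ) : ℂ) := fun u => by ring
      simp_rw [this]
      rw [integral_sub (int_G.const_mul _) int_left, integral_const_mul, integral_ofReal']
    rw [e1, hswap, e2, e3]
  rw [hchain]
  ring

lemma iterPrim_nonneg {F : ℝ → ℝ} (hF0 : ∀ t, 0 ≤ F t) : ∀ m t, 0 ≤ iterPrim F m t
  | 0, t => hF0 t
  | (m + 1), t => setIntegral_nonneg measurableSet_Ioc fun u _ => iterPrim_nonneg hF0 m u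

lemma iterPrim_monotone {F : ℝ → ℝ} (hF : Monotone F) (hF0 : ∀ t, 0 ≤ F t) :
    ∀ m, Monotone (iterPrim F m)
  | 0 => hF
  | (m + 1) => by
    intro t t' htt'
    show (∫ u in Ioc (0:ℝ) t, iterPrim F m u) ≤ ∫ u in Ioc (0:ℝ) t', iterPrim F m u
    refine setIntegral_mono_set
      (integrableOn_of_monotone (iterPrim_monotone hF hF0 m) (iterPrim_nonneg hF0 m) 0 t')
      (Eventually.of_forall fun u => iterPrim_nonneg hF0 m u)
      (HasSubset.Subset.eventuallyLE (Ioc_subset_Ioc_right htt'))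

lemma iterPrim_le {F : ℝ → ℝ} (hF : Monotone F) (hF0 : ∀ t, 0 ≤ F t) {β C δ : ℝ}
    (hβ : -1 < β) (hC : 0 ≤ C) (hFle : ∀ u ∈ Ioc (0:ℝ) δ, F u ≤ C * u ^ β) :
    ∀ m, ∃ C', 0 ≤ C' ∧ ∀ u ∈ Ioc (0:ℝ) δ, iterPrim F m u ≤ C' * u ^ (β + m)
  | 0 => ⟨C, hC, by simpa [iterPrim] using hFle⟩
  | (m + 1) => by
    obtain ⟨C', hC', hle⟩ := iterPrim_le hF hF0 hβ hC hFle m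
    have hm0 : (0:ℝ) ≤ m := Nat.cast_nonneg m
    have hβm : -1 < β + m := by linarith
    have hβm1 : 0 < β + m + 1 := by linarith
    refine ⟨C' / (β + m + 1), div_nonneg hC' hβm1.le, fun u hu => ?_⟩
    have hb := prim_bound hβm (iterPrim_monotone hF hF0 m).measurable
      (iterPrim_nonneg hF0 m) hle hu
    have hcast : β + ((m : ℝ) + 1) = β + m + 1 := by ring
    show (∫ v in Ioc (0:ℝ) u, iterPrim F m v) ≤ C' / (β + m + 1) * u ^ (β + ((m:ℕ)+1 : ℕ))
    rw [show ((((m:ℕ)+1 : ℕ)) : ℝ) = (m : ℝ) + 1 by push_cast; ring, hcast]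
    exact hb

lemma main_aux {e : ℂ} {β C δ : ℝ} (hδ : 0 < δ) (hβ : -1 < β) (hβe : -1 < β + e.re)
    (hC : 0 ≤ C) {F : ℝ → ℝ} (hF : Monotone F) (hF0 : ∀ t, 0 ≤ F t)
    (hFle : ∀ u ∈ Ioc (0:ℝ) δ, F u ≤ C * u ^ β) (m : ℕ) :
    (∫ t in Ioc (0:ℝ) δ, (t : ℂ) ^ e * ((F t : ℝ) : ℂ))
      = (∑ n ∈ Finset.Icc 1 m,
          risingFact (-e) (n - 1) * (δ : ℂ) ^ (e + 1 - n) * ((iterPrim F n δ : ℝ) : ℂ))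
        + risingFact (-e) m *
            ∫ t in Ioc (0:ℝ) δ, (t : ℂ) ^ (e - m) * ((iterPrim F m t : ℝ) : ℂ) := by
  induction m with
  | zero =>
    rw [Finset.Icc_eq_empty (by norm_num : ¬ (1:ℕ) ≤ 0)]
    simp [risingFact, iterPrim]
  | succ m ih =>
    obtain ⟨C', hC', hle⟩ := iterPrim_le hF hF0 hβ hC hFle m
    have hm0 : (0:ℝ) ≤ m := Nat.cast_nonneg m
    have hβm : -1 < β + m := by linarith
    have hβem : -1 < (β + m) + (e - m).re := by
      have : (e - (m:ℂ)).re = e.re - m := by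
        simp [Complex.sub_re, Complex.natCast_re]
      rw [this]; linarith
    have hstep := step (a := e - m) hδ hβm hβem (iterPrim_monotone hF hF0 m)
      (iterPrim_nonneg hF0 m) hle
    rw [ih, hstep]
    rw [Finset.sum_Icc_succ_top (by omega : 1 ≤ m + 1)]
    have hiter_top : (∫ u in Ioc (0:ℝ) δ, iterPrim F m u) = iterPrim F (m+1) δ := rfl
    have hiter_in : ∀ t : ℝ, (∫ u in Ioc (0:ℝ) t, iterPrim F m u) = iterPrim F (m+1) t :=
      fun _ => rfl
    simp only [hiter_top, hiter_in]
    have hc1 : ((m+1 : ℕ) : ℂ) = (m : ℂ) + 1 := by push_cast; ring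
    simp only [hc1, show e + 1 - ((m:ℂ) + 1) = e - m from by ring,
      show e - ((m:ℂ) + 1) = e - m - 1 from by ring,
      show (m + 1) - 1 = m from rfl]
    have hrf : risingFact (-e) (m + 1) = risingFact (-e) m * (-e + m) := by
      unfold risingFact
      rw [Finset.prod_range_succ]
    rw [hrf]
    ring

end TubeZetaAux

/-- Functional equation for iterated primitives of the tube function: for a bounded
`A ⊆ ℝ^N`, every `m ≥ 1`, `δ > 0` and `s` with `Re s > dim̄_B A`,
`ζ̃_A(s) = ∑_{n=1}^m (N-s+1)_{n-1} δ^{s-N-n} V_A^[n](δ)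
          + (N-s+1)_m ∫₀^δ t^{s-N-1-m} V_A^[m](t) dt`. -/
theorem tube_zeta_functional_equation {N : ℕ} (A : Set (EuclideanSpace ℝ (Fin N)))
    (hA : Bornology.IsBounded A) (m : ℕ) (hm : 1 ≤ m) (δ : ℝ) (hδ : 0 < δ)
    (s : ℂ) (hs : ubDim A < s.re) :
    (∫ t in Set.Ioc (0 : ℝ) δ, (t : ℂ) ^ (s - N - 1) * ((tubeVol A t : ℝ) : ℂ)) =
      (∑ n ∈ Finset.Icc 1 m,
        risingFact ((N : ℂ) - s + 1) (n - 1) * (δ : ℂ) ^ (s - N - n) *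
          ((iterPrim (tubeVol A) n δ : ℝ) : ℂ)) +
      risingFact ((N : ℂ) - s + 1) m *
        ∫ t in Set.Ioc (0 : ℝ) δ,
          (t : ℂ) ^ (s - N - 1 - m) * ((iterPrim (tubeVol A) m t : ℝ) : ℂ) := by
  classical
  set F := tubeVol A with hFdef
  -- basic properties of the tube function
  have hFmono : Monotone F := by
    intro t t' htt'
    exact ENNReal.toReal_mono (hA.thickening.measure_lt_top).ne
      (measure_mono (Metric.thickening_mono htt' A))
  have hF0 : ∀ t, 0 ≤ F t := fun t => ENNReal.toReal_nonneg
  -- the auxiliary function whose limsup is the upper box dimension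
  set f : ℝ → ℝ := fun t => (N : ℝ) - Real.log (F t) / Real.log t with hfdef
  set M : ℝ := max (F δ) 1 with hMdef
  have hM1 : (1:ℝ) ≤ M := le_max_right _ _
  have hlogM : 0 ≤ Real.log M := Real.log_nonneg hM1
  set t₁ : ℝ := min (min δ 2⁻¹) (Real.exp (-2 * Real.log M - 1)) with ht₁def
  have ht₁pos : 0 < t₁ := lt_min (lt_min hδ (by norm_num)) (Real.exp_pos _)
  -- eventual boundedness of `f`
  have hB2 : ∀ t ∈ Set.Ioc (0:ℝ) t₁, f t ≤ N + 2⁻¹ := by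
    intro t ht
    have ht0 : 0 < t := ht.1
    have ht_half : t ≤ 2⁻¹ := ht.2.trans ((min_le_left _ _).trans (min_le_right _ _))
    have htδ : t ≤ δ := ht.2.trans ((min_le_left _ _).trans (min_le_left _ _))
    have htlt1 : t < 1 := lt_of_le_of_lt ht_half (by norm_num)
    have hlogt : Real.log t < 0 := Real.log_neg ht0 htlt1
    have hsuff : -2⁻¹ ≤ Real.log (F t) / Real.log t := by
      rcases eq_or_lt_of_le (hF0 t) with h0 | hpos
      · rw [← h0, Real.log_zero, zero_div]; norm_num
      · have h1 : Real.log (F t) ≤ Real.log M :=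
          Real.log_le_log hpos ((hFmono htδ).trans (le_max_left _ _))
        have h2 : 0 ≤ (Real.log (F t) - Real.log M) / Real.log t :=
          div_nonneg_of_nonpos (by linarith) hlogt.le
        rw [sub_div] at h2
        have h3 : -2⁻¹ ≤ Real.log M / Real.log t := by
          rw [le_div_iff_of_neg hlogt]
          have hlt : Real.log t ≤ -2 * Real.log M - 1 := by
            calc Real.log t ≤ Real.log (Real.exp (-2 * Real.log M - 1)) :=
                  Real.log_le_log ht0 (ht.2.trans (min_le_right _ _))
              _ = -2 * Real.log M - 1 := Real.log_exp _
          linarith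
        linarith
    simp only [hfdef]
    linarith
  have hEvmem : Set.Ioc (0:ℝ) t₁ ∈ nhdsWithin (0:ℝ) (Set.Ioi 0) :=
    Ioc_mem_nhdsGT_of_mem ⟨le_refl 0, ht₁pos⟩
  have hEvB : ∀ᶠ t in nhdsWithin (0:ℝ) (Set.Ioi 0), f t ≤ N + 2⁻¹ :=
    eventually_of_mem hEvmem hB2
  have hbdd : Filter.IsBoundedUnder (· ≤ ·) (nhdsWithin (0:ℝ) (Set.Ioi 0)) f :=
    ⟨(N:ℝ) + 2⁻¹, eventually_map.2 hEvB⟩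
  -- extract a power bound from the dimension hypothesis
  set σ₁ : ℝ := (ubDim A + s.re) / 2 with hσ₁def
  have hσ₁a : ubDim A < σ₁ := by simp only [hσ₁def]; linarith
  have hσ₁b : σ₁ < s.re := by simp only [hσ₁def]; linarith
  have hEv1 : ∀ᶠ t in nhdsWithin (0:ℝ) (Set.Ioi 0), f t < σ₁ := by
    refine Filter.eventually_lt_of_limsup_lt ?_ hbdd
    exact hσ₁a
  set σ : ℝ := min σ₁ ((N:ℝ) + 4⁻¹ + 2⁻¹) with hσdef
  have hσs : σ < s.re := lt_of_le_of_lt (min_le_left _ _) hσ₁b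
  have hσN : σ < (N:ℝ) + 1 := lt_of_le_of_lt (min_le_right _ _) (by linarith)
  set β : ℝ := (N:ℝ) - σ with hβdef
  have hβ : -1 < β := by simp only [hβdef]; linarith
  have hEvf : ∀ᶠ t in nhdsWithin (0:ℝ) (Set.Ioi 0), f t < σ := by
    filter_upwards [hEv1, hEvB] with t h1 h2
    refine lt_min h1 (lt_of_le_of_lt h2 ?_)
    norm_num
  have hEvF : ∀ᶠ t in nhdsWithin (0:ℝ) (Set.Ioi 0), F t ≤ t ^ β := by
    have hIoo : Set.Ioc (0:ℝ) (min t₁ 2⁻¹) ∈ nhdsWithin (0:ℝ) (Set.Ioi 0) :=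
      Ioc_mem_nhdsGT_of_mem ⟨le_refl 0, lt_min ht₁pos (by norm_num)⟩
    filter_upwards [hEvf, eventually_of_mem hIoo (fun t ht => ht)] with t hft ht
    have ht0 : 0 < t := ht.1
    have htlt1 : t < 1 := lt_of_le_of_lt (ht.2.trans (min_le_right _ _)) (by norm_num)
    rcases eq_or_lt_of_le (hF0 t) with h0 | hpos
    · rw [← h0]
      exact Real.rpow_nonneg ht0.le _
    · have hlogt : Real.log t < 0 := Real.log_neg ht0 htlt1
      have h1 : (N:ℝ) - σ < Real.log (F t) / Real.log t := by
        simp only [hfdef] at hft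
        linarith
      have h2 : Real.log (F t) < ((N:ℝ) - σ) * Real.log t := (lt_div_iff_of_neg hlogt).1 h1
      calc F t = Real.exp (Real.log (F t)) := (Real.exp_log hpos).symm
        _ ≤ Real.exp (((N:ℝ) - σ) * Real.log t) := Real.exp_le_exp.2 h2.le
        _ = t ^ β := by rw [Real.rpow_def_of_pos ht0, mul_comm]
  obtain ⟨t₀, ht₀pos, ht₀sub⟩ := mem_nhdsGT_iff_exists_Ioc_subset.1 hEvF
  set t₂ : ℝ := min t₀ δ with ht₂def
  have ht₂pos : 0 < t₂ := lt_min ht₀pos hδ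
  set c : ℝ := min (t₂ ^ β) (δ ^ β) with hcdef
  have hc : 0 < c := lt_min (Real.rpow_pos_of_pos ht₂pos _) (Real.rpow_pos_of_pos hδ _)
  set CC : ℝ := max 1 (M / c) with hCCdef
  have hCC1 : (1:ℝ) ≤ CC := le_max_left _ _
  have hCC0 : (0:ℝ) ≤ CC := le_trans zero_le_one hCC1
  have hFle : ∀ u ∈ Set.Ioc (0:ℝ) δ, F u ≤ CC * u ^ β := by
    intro u hu
    rcases le_or_gt u t₂ with h | h
    · have hsub : F u ≤ u ^ β := ht₀sub ⟨hu.1, h.trans (min_le_left _ _)⟩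
      calc F u ≤ u ^ β := hsub
        _ ≤ CC * u ^ β := le_mul_of_one_le_left (Real.rpow_nonneg hu.1.le _) hCC1
    · have h1 : F u ≤ M := (hFmono hu.2).trans (le_max_left _ _)
      have h2 : c ≤ u ^ β := by
        rcases le_or_gt 0 β with hb | hb
        · exact (min_le_left _ _).trans (Real.rpow_le_rpow ht₂pos.le h.le hb)
        · exact (min_le_right _ _).trans (Real.rpow_le_rpow_of_nonpos hu.1 hu.2 hb.le)
      calc F u ≤ M := h1
        _ = (M / c) * c := by field_simp
        _ ≤ CC * (u ^ β) := mul_le_mul (le_max_right _ _) h2 hc.le hCC0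
  have hβe : -1 < β + (s - (N:ℂ) - 1).re := by
    have hre : (s - (N:ℂ) - 1).re = s.re - N - 1 := by
      simp [Complex.sub_re, Complex.natCast_re, Complex.one_re]
    rw [hre]
    simp only [hβdef]
    linarith
  have key := TubeZetaAux.main_aux (e := s - (N:ℂ) - 1) hδ hβ hβe hCC0 hFmono hF0 hFle m
  rw [key]
  simp only [show -(s - (N:ℂ) - 1) = (N:ℂ) - s + 1 from by ring]
  have hexp : ∀ n : ℕ, s - (N:ℂ) - 1 + 1 - (n:ℂ) = s - (N:ℂ) - (n:ℂ) := fun n => by ring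
  simp only [hexp]
end
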